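/- Let π_θ* be the optimal p-value and τ_θ the typicality index, both defined relative to densities f_1,...,f_L > 0 and prior weights w_1,...,w_L > 0, and for w_0 > 0 define the compromise p-value π̃_θ^{w_0}(x) := P_θ{z : (f_θ/(f + w_0))(z) ≤ (f_θ/(f + w_0))(x)} where f = Σ_b w_b f_b. Suppose the laws of f_θ(X)/f(X), of f_θ(X), and of f_θ(X)/(f(X)+w_0) under X ~ P_θ are continuous. Then for each fixed x: π̃_θ^{w_0}(x) → τ_θ(x) as w_0 → ∞, and π̃_θ^{w_0}(x) → π_θ*(x) as w_0 → 0 (along points of continuity), by dominated convergence applied to the indicator comparisons. -/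

import Mathlib

open MeasureTheory Filter

lemma aux_tendsto {𝓧 : Type*} [MeasurableSpace 𝓧] (Pθ : Measure 𝓧) [IsProbabilityMeasure Pθ]
    {ι : Type*} {l : Filter ι} [l.IsCountablyGenerated]
    {A : ι → Set 𝓧} {B : Set 𝓧}
    (hA : ∀ i, MeasurableSet (A i)) (hB : MeasurableSet B)
    (h : ∀ᵐ z ∂Pθ, ∀ᶠ i in l, (z ∈ A i ↔ z ∈ B)) :
    Tendsto (fun i => (Pθ (A i)).toReal) l (nhds ((Pθ B).toReal)) := by
  have h1 : ∀ i, (Pθ (A i)).toReal = ∫ z, (A i).indicator (fun _ => (1:ℝ)) z ∂Pθ :=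
    fun i => (integral_indicator_one (hA i)).symm
  have h2 : (Pθ B).toReal = ∫ z, B.indicator (fun _ => (1:ℝ)) z ∂Pθ :=
    (integral_indicator_one hB).symm
  simp_rw [h1, h2]
  refine tendsto_integral_filter_of_dominated_convergence (fun _ => (1:ℝ))
    (Eventually.of_forall fun i => (measurable_one.indicator (hA i)).aestronglyMeasurable)
    (Eventually.of_forall fun i => Eventually.of_forall fun z => ?_)
    (integrable_const 1)
    (h.mono fun z hz => ?_)
  · by_cases hzi : z ∈ A i <;> simp [Set.indicator_apply, hzi]
  · refine tendsto_const_nhds.congr' ?_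
    filter_upwards [hz] with i hi
    by_cases hzB : z ∈ B
    · simp [Set.indicator_apply, hzB, hi.mpr hzB]
    · simp [Set.indicator_apply, hzB, fun hc => hzB (hi.mp hc), hi]

/-- the compromise p-value `π̃_θ^{w₀}` converges pointwise to
the typicality index as `w₀ → ∞` and to the optimal p-value as `w₀ ↓ 0`. -/
theorem stmt19 {𝓧 : Type*} [MeasurableSpace 𝓧]
    (M : Measure 𝓧) {L : ℕ}
    (f : Fin L → 𝓧 → ℝ) (hfpos : ∀ b x, 0 < f b x)
    (hfmeas : ∀ b, Measurable (f b))
    (w : Fin L → ℝ) (hw : ∀ b, 0 < w b)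
    (fbar : 𝓧 → ℝ) (hfbar : ∀ x, fbar x = ∑ b, w b * f b x)
    (θ : Fin L)
    (Pθ : Measure 𝓧)
    (hPθ : Pθ = M.withDensity fun x => ENNReal.ofReal (f θ x))
    [IsProbabilityMeasure Pθ]
    (πstar τ : 𝓧 → ℝ) (πt : ℝ → 𝓧 → ℝ)
    (hπstar : ∀ x, πstar x = (Pθ {z | f θ z / fbar z ≤ f θ x / fbar x}).toReal)
    (hτ : ∀ x, τ x = (Pθ {z | f θ z ≤ f θ x}).toReal)
    (hπt : ∀ w0 x, πt w0 x =
      (Pθ {z | f θ z / (fbar z + w0) ≤ f θ x / (fbar x + w0)}).toReal)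
    (hcont1 : ∀ c : ℝ, Pθ {z | f θ z / fbar z = c} = 0)
    (hcont2 : ∀ c : ℝ, Pθ {z | f θ z = c} = 0)
    (hcont3 : ∀ w0 : ℝ, 0 < w0 → ∀ c : ℝ, Pθ {z | f θ z / (fbar z + w0) = c} = 0) :
    ∀ x, Tendsto (fun w0 => πt w0 x) atTop (nhds (τ x)) ∧
      Tendsto (fun w0 => πt w0 x) (nhdsWithin 0 (Set.Ioi 0)) (nhds (πstar x)) := by
  have hfbarpos : ∀ x, 0 < fbar x := fun x => by
    rw [hfbar]
    exact Finset.sum_pos (fun b _ => mul_pos (hw b) (hfpos b x)) ⟨θ, Finset.mem_univ θ⟩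
  have hfbarmeas : Measurable fbar := by
    have : fbar = fun x => ∑ b, w b * f b x := funext hfbar
    rw [this]
    exact Finset.measurable_sum _ fun b _ => (hfmeas b).const_mul (w b)
  have hAmeas : ∀ (w0 : ℝ) (c : ℝ), MeasurableSet {z | f θ z / (fbar z + w0) ≤ c} :=
    fun w0 c => measurableSet_le ((hfmeas θ).div (hfbarmeas.add_const w0)) measurable_const
  intro x
  have hπt' : (fun w0 => πt w0 x) =
      fun w0 => (Pθ {z | f θ z / (fbar z + w0) ≤ f θ x / (fbar x + w0)}).toReal :=
    funext fun w0 => hπt w0 x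
  constructor
  · -- w0 → ∞ : limit is τ
    rw [hτ, hπt']
    refine aux_tendsto Pθ (fun w0 => hAmeas w0 _)
      (measurableSet_le (hfmeas θ) measurable_const) ?_
    have hnull : Pθ {z | f θ z = f θ x} = 0 := hcont2 (f θ x)
    rw [ae_iff]
    refine measure_mono_null (fun z hz => ?_) hnull
    simp only [Set.mem_setOf_eq] at hz ⊢
    by_contra hne
    refine hz ?_
    have hbpos := hfbarpos z; have hdpos := hfbarpos x
    rcases lt_or_gt_of_ne hne with hlt | hgt
    · filter_upwards [eventually_ge_atTop ((f θ z * fbar x - f θ x * fbar z)/(f θ x - f θ z)),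
        eventually_gt_atTop 0] with w0 hw1 hw2
      have hden1 : 0 < fbar z + w0 := by linarith
      have hden2 : 0 < fbar x + w0 := by linarith
      constructor
      · intro _; exact le_of_lt hlt
      · intro _
        rw [div_le_div_iff₀ hden1 hden2]
        have := (div_le_iff₀ (sub_pos.2 hlt)).mp hw1
        nlinarith
    · filter_upwards [eventually_gt_atTop ((f θ x * fbar z - f θ z * fbar x)/(f θ z - f θ x)),
        eventually_gt_atTop 0] with w0 hw1 hw2
      have hden1 : 0 < fbar z + w0 := by linarith
      have hden2 : 0 < fbar x + w0 := by linarith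
      constructor
      · intro hmem
        rw [div_le_div_iff₀ hden1 hden2] at hmem
        have := (div_lt_iff₀ (sub_pos.2 hgt)).mp hw1
        nlinarith
      · intro hmem
        exact absurd hmem (not_le.2 hgt)
  · -- w0 → 0⁺ : limit is πstar
    rw [hπstar, hπt']
    refine aux_tendsto Pθ (fun w0 => hAmeas w0 _)
      (measurableSet_le ((hfmeas θ).div hfbarmeas) measurable_const) ?_
    have hnull : Pθ {z | f θ z / fbar z = f θ x / fbar x} = 0 := hcont1 (f θ x / fbar x)
    rw [ae_iff]
    refine measure_mono_null (fun z hz => ?_) hnull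
    simp only [Set.mem_setOf_eq] at hz ⊢
    by_contra hne
    refine hz ?_
    have hbpos := hfbarpos z; have hdpos := hfbarpos x
    set a := f θ z with ha; set b := fbar z with hb
    set c := f θ x with hc; set d := fbar x with hd
    have hne' : a * d ≠ c * b := fun hcross =>
      hne ((div_eq_div_iff hbpos.ne' hdpos.ne').mpr hcross)
    rcases lt_or_gt_of_ne hne' with hlt | hgt
    · have hδ : 0 < (c*b - a*d)/(|a - c| + 1) := div_pos (by linarith) (by positivity)
      filter_upwards [Ioo_mem_nhdsGT_of_mem (Set.left_mem_Ico.mpr hδ)] with w0 hw0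
      obtain ⟨hw1, hw2⟩ := hw0
      have hden1 : 0 < b + w0 := by linarith
      have hden2 : 0 < d + w0 := by linarith
      have h2 : w0 * (|a - c| + 1) < c*b - a*d :=
        (lt_div_iff₀ (by positivity : (0:ℝ) < |a - c| + 1)).mp hw2
      have h1 : w0 * (a - c) ≤ w0 * |a - c| :=
        mul_le_mul_of_nonneg_left (le_abs_self _) (le_of_lt hw1)
      have key : w0 * (a - c) < c*b - a*d := by nlinarith
      constructor
      · intro _
        rw [div_le_div_iff₀ hbpos hdpos]
        linarith
      · intro _
        rw [div_le_div_iff₀ hden1 hden2]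
        nlinarith
    · have hδ : 0 < (a*d - c*b)/(|c - a| + 1) := div_pos (by linarith) (by positivity)
      filter_upwards [Ioo_mem_nhdsGT_of_mem (Set.left_mem_Ico.mpr hδ)] with w0 hw0
      obtain ⟨hw1, hw2⟩ := hw0
      have hden1 : 0 < b + w0 := by linarith
      have hden2 : 0 < d + w0 := by linarith
      have h2 : w0 * (|c - a| + 1) < a*d - c*b :=
        (lt_div_iff₀ (by positivity : (0:ℝ) < |c - a| + 1)).mp hw2
      have h1 : w0 * (c - a) ≤ w0 * |c - a| :=
        mul_le_mul_of_nonneg_left (le_abs_self _) (le_of_lt hw1)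
      have key : w0 * (c - a) < a*d - c*b := by nlinarith
      constructor
      · intro hmem
        rw [div_le_div_iff₀ hden1 hden2] at hmem
        nlinarith
      · intro hmem
        rw [div_le_div_iff₀ hbpos hdpos] at hmem
        nlinarith
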